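/- Let R ∈ ℂ^{n×n} with R ≥ 0, B ∈ ℂ^{n×m}, and K ∈ ℂ^{m×m} with K > 0 (Hermitian positive definite). Then R + B K B* ≥ 0 and rank(R + B K B*) = rank([R, B]) = rank([R + B K B*, B]). -/

import Mathlib

open Matrix
open scoped ComplexOrder

private lemma rank_eq_of_ker_eq {k : ℕ} {m₁ m₂ : Type*} [Fintype m₁] [Fintype m₂]
    (A : Matrix m₁ (Fin k) ℂ) (C : Matrix m₂ (Fin k) ℂ)
    (h : LinearMap.ker A.mulVecLin = LinearMap.ker C.mulVecLin) : A.rank = C.rank := by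
  have h1 := LinearMap.finrank_range_add_finrank_ker A.mulVecLin
  have h2 := LinearMap.finrank_range_add_finrank_ker C.mulVecLin
  rw [h] at h1
  rw [Matrix.rank, Matrix.rank]
  omega

private lemma sum_elim_zero_iff {α β γ : Type*} [Zero γ] (f : α → γ) (g : β → γ) :
    Sum.elim f g = 0 ↔ f = 0 ∧ g = 0 := by
  constructor
  · intro h
    constructor <;> ext i
    · exact congrFun h (Sum.inl i)
    · exact congrFun h (Sum.inr i)
  · rintro ⟨hf, hg⟩
    ext (i | i) <;> simp [hf, hg]

/-- For R ⪰ 0 and K ≻ 0: R + BKB* ⪰ 0 and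
rank(R + BKB*) = rank [R, B] = rank [R + BKB*, B]. -/
theorem stmt_4 {n m : ℕ}
    (R : Matrix (Fin n) (Fin n) ℂ) (B : Matrix (Fin n) (Fin m) ℂ)
    (K : Matrix (Fin m) (Fin m) ℂ)
    (hR : R.PosSemidef) (hK : K.PosDef) :
    (R + B * K * Bᴴ).PosSemidef ∧
    (R + B * K * Bᴴ).rank = (Matrix.fromCols R B).rank ∧
    (Matrix.fromCols R B).rank = (Matrix.fromCols (R + B * K * Bᴴ) B).rank := by
  set S := R + B * K * Bᴴ with hSdef
  have hBKB : (B * K * Bᴴ).PosSemidef := hK.posSemidef.mul_mul_conjTranspose_same B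
  have hS : S.PosSemidef := hR.add hBKB
  -- kernel characterization
  have hker : ∀ x : Fin n → ℂ, S *ᵥ x = 0 ↔ (R *ᵥ x = 0 ∧ Bᴴ *ᵥ x = 0) := by
    intro x
    constructor
    · intro hx
      have h0 : star x ⬝ᵥ S *ᵥ x = 0 := by rw [hx, dotProduct_zero]
      have hsum : star x ⬝ᵥ R *ᵥ x + star x ⬝ᵥ (B * K * Bᴴ) *ᵥ x = 0 := by
        rw [hSdef, add_mulVec, dotProduct_add] at h0
        exact h0
      have hR0 : star x ⬝ᵥ R *ᵥ x = 0 ∧ star x ⬝ᵥ (B * K * Bᴴ) *ᵥ x = 0 := by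
        have := (add_eq_zero_iff_of_nonneg (hR.dotProduct_mulVec_nonneg x) (hBKB.dotProduct_mulVec_nonneg x)).mp
        exact this hsum
      refine ⟨(hR.dotProduct_mulVec_zero_iff x).mp hR0.1, ?_⟩
      by_contra hBx
      have hpos := hK.dotProduct_mulVec_pos hBx
      have heq : star x ⬝ᵥ (B * K * Bᴴ) *ᵥ x = star (Bᴴ *ᵥ x) ⬝ᵥ K *ᵥ (Bᴴ *ᵥ x) := by
        rw [← mulVec_mulVec, ← mulVec_mulVec, dotProduct_mulVec, star_mulVec,
          conjTranspose_conjTranspose]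
      rw [heq] at hR0
      exact absurd hR0.2 (ne_of_gt hpos)
    · rintro ⟨h1, h2⟩
      rw [hSdef, add_mulVec, h1, ← mulVec_mulVec, ← mulVec_mulVec, h2]
      simp
  have hkerS : LinearMap.ker S.mulVecLin = LinearMap.ker (fromRows R Bᴴ).mulVecLin := by
    ext x
    simp only [LinearMap.mem_ker, mulVecLin_apply, fromRows_mulVec, sum_elim_zero_iff]
    exact hker x
  have hkerS2 : LinearMap.ker (fromRows S Bᴴ).mulVecLin
      = LinearMap.ker (fromRows R Bᴴ).mulVecLin := by
    ext x
    simp only [LinearMap.mem_ker, mulVecLin_apply, fromRows_mulVec, sum_elim_zero_iff]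
    constructor
    · rintro ⟨h1, h2⟩; exact ⟨((hker x).mp h1).1, h2⟩
    · rintro ⟨h1, h2⟩; exact ⟨(hker x).mpr ⟨h1, h2⟩, h2⟩
  have e1 : (fromCols R B).rank = (fromRows R Bᴴ).rank := by
    rw [← rank_conjTranspose (fromCols R B),
      conjTranspose_fromCols_eq_fromRows_conjTranspose, hR.isHermitian.eq]
  have e2 : (fromCols S B).rank = (fromRows S Bᴴ).rank := by
    rw [← rank_conjTranspose (fromCols S B),
      conjTranspose_fromCols_eq_fromRows_conjTranspose, hS.isHermitian.eq]
  refine ⟨hS, ?_, ?_⟩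
  · rw [e1]; exact rank_eq_of_ker_eq _ _ hkerS
  · rw [e1, e2]; exact (rank_eq_of_ker_eq _ _ hkerS2).symm
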